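/- Let R be an integral domain and let Δ = Δ₁·Δ₂ be a nonempty nonsingular product complex (Δ₁ a d₁-complex, Δ₂ a d₂-complex, necessarily with disjoint supports). Then Δ admits a nondegenerate R-balancing if and only if both Δ₁ and Δ₂ admit nondegenerate R-balancings. -/

import Mathlib

open scoped BigOperators

/-- The multiplicity `m(T ⊆ σ) = ∏ i, C(σ i, T i)` of a multiset `T` in a multiset `σ`
on `{1, …, n}` (multisets encoded as functions `Fin n → ℕ`). -/
def mult {n : ℕ} (T σ : Fin n → ℕ) : ℕ := ∏ i, (σ i).choose (T i)

open scoped Classical in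
/-- Restriction of a multiset to the support of `Δ₁`. -/
noncomputable def res1 {n : ℕ} (Δ₁ : Finset (Fin n → ℕ)) (σ : Fin n → ℕ) : Fin n → ℕ :=
  fun i => if ∃ τ ∈ Δ₁, τ i ≠ 0 then σ i else 0

open scoped Classical in
/-- Restriction of a multiset to the complement of the support of `Δ₁`. -/
noncomputable def res2 {n : ℕ} (Δ₁ : Finset (Fin n → ℕ)) (σ : Fin n → ℕ) : Fin n → ℕ :=
  fun i => if ∃ τ ∈ Δ₁, τ i ≠ 0 then 0 else σ i

lemma res_add {n : ℕ} (Δ₁ : Finset (Fin n → ℕ)) (σ : Fin n → ℕ) (i : Fin n) :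
    res1 Δ₁ σ i + res2 Δ₁ σ i = σ i := by
  simp only [res1, res2]; split <;> simp

/-- On a pure `d`-complex, `mult τ σ` for simplices `σ τ` is a Kronecker delta. -/
lemma mult_delta {n d : ℕ} (Δ : Finset (Fin n → ℕ))
    (hc : ∀ σ ∈ Δ, ∑ i, σ i = d + 1) (hone : ∀ σ ∈ Δ, ∀ i, σ i ≤ 1)
    {σ τ : Fin n → ℕ} (hσ : σ ∈ Δ) (hτ : τ ∈ Δ) :
    mult τ σ = if σ = τ then 1 else 0 := by
  split
  · next h => subst h; simp [mult, Nat.choose_self]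
  · next h =>
    by_cases hle : ∀ i, τ i ≤ σ i
    · exfalso
      apply h
      funext i
      by_contra hne
      have hlt : τ i < σ i := lt_of_le_of_ne (hle i) (fun e => hne e.symm)
      have hsum := Finset.sum_lt_sum (fun j _ => hle j) ⟨i, Finset.mem_univ i, hlt⟩
      rw [hc σ hσ, hc τ hτ] at hsum
      exact lt_irrefl _ hsum
    · push_neg at hle
      obtain ⟨i, hi⟩ := hle
      exact Finset.prod_eq_zero (Finset.mem_univ i) (Nat.choose_eq_zero_of_lt hi)

/-- Let `R` be an integral domain and `Δ = Δ₁·Δ₂` a nonempty nonsingular product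
complex, where `Δ₁` is a `d₁`-complex and `Δ₂` a `d₂`-complex. Then `Δ` admits a
nondegenerate `R`-balancing if and only if both `Δ₁` and `Δ₂` do. -/
theorem product_nondegenerate_balancing_iff (R : Type*) [CommRing R] [IsDomain R]
    {n d₁ d₂ : ℕ} (Δ₁ Δ₂ : Finset (Fin n → ℕ))
    (hc₁ : ∀ σ ∈ Δ₁, ∑ i, σ i = d₁ + 1) (hc₂ : ∀ σ ∈ Δ₂, ∑ i, σ i = d₂ + 1)
    (hne : ((Δ₁ ×ˢ Δ₂).image (fun p => p.1 + p.2)).Nonempty)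
    (hns : ∀ σ ∈ (Δ₁ ×ˢ Δ₂).image (fun p => p.1 + p.2), ∀ i, σ i ≤ 1) :
    (∃ w : (Fin n → ℕ) → R,
        (∀ σ ∈ (Δ₁ ×ˢ Δ₂).image (fun p => p.1 + p.2), w σ ≠ 0) ∧
        ∀ S : Fin n → ℕ, ∑ i, S i ≤ d₁ + d₂ + 1 →
          ∑ σ ∈ (Δ₁ ×ˢ Δ₂).image (fun p => p.1 + p.2), w σ * (mult S σ : R) = 0)
      ↔ ((∃ w₁ : (Fin n → ℕ) → R, (∀ σ ∈ Δ₁, w₁ σ ≠ 0) ∧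
            ∀ S : Fin n → ℕ, ∑ i, S i ≤ d₁ →
              ∑ σ ∈ Δ₁, w₁ σ * (mult S σ : R) = 0) ∧
         (∃ w₂ : (Fin n → ℕ) → R, (∀ σ ∈ Δ₂, w₂ σ ≠ 0) ∧
            ∀ S : Fin n → ℕ, ∑ i, S i ≤ d₂ →
              ∑ σ ∈ Δ₂, w₂ σ * (mult S σ : R) = 0)) := by
  classical
  obtain ⟨σ₀, hσ₀⟩ := hne
  obtain ⟨p₀, hp₀, hp₀e⟩ := Finset.mem_image.mp hσ₀
  obtain ⟨hτ₁, hτ₂⟩ := Finset.mem_product.mp hp₀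
  set τ₁ : Fin n → ℕ := p₀.1 with hτ₁def
  set τ₂ : Fin n → ℕ := p₀.2 with hτ₂def
  -- membership of sums in the product complex
  have hmemΔ : ∀ σ₁ ∈ Δ₁, ∀ σ₂ ∈ Δ₂,
      σ₁ + σ₂ ∈ (Δ₁ ×ˢ Δ₂).image (fun p => p.1 + p.2) := fun σ₁ h₁ σ₂ h₂ =>
    Finset.mem_image.mpr ⟨(σ₁, σ₂), Finset.mem_product.mpr ⟨h₁, h₂⟩, rfl⟩
  -- disjointness of supports
  have hdisj : ∀ σ₁ ∈ Δ₁, ∀ σ₂ ∈ Δ₂, ∀ i, σ₁ i + σ₂ i ≤ 1 := by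
    intro σ₁ h₁ σ₂ h₂ i
    exact hns _ (hmemΔ σ₁ h₁ σ₂ h₂) i
  have hone₁ : ∀ σ ∈ Δ₁, ∀ i, σ i ≤ 1 := by
    intro σ hσ i
    have := hdisj σ hσ τ₂ hτ₂ i; omega
  have hone₂ : ∀ σ ∈ Δ₂, ∀ i, σ i ≤ 1 := by
    intro σ hσ i
    have := hdisj τ₁ hτ₁ σ hσ i; omega
  -- a simplex of Δ₂ vanishes on the support of Δ₁
  have hP2 : ∀ σ₂ ∈ Δ₂, ∀ i, (∃ τ ∈ Δ₁, τ i ≠ 0) → σ₂ i = 0 := by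
    rintro σ₂ h₂ i ⟨τ, hτ, hτi⟩
    have := hdisj τ hτ σ₂ h₂ i
    omega
  have hP1 : ∀ σ₁ ∈ Δ₁, ∀ i, ¬(∃ τ ∈ Δ₁, τ i ≠ 0) → σ₁ i = 0 := by
    intro σ₁ h₁ i h
    push_neg at h
    exact h σ₁ h₁
  have hkey1 : ∀ σ₁ ∈ Δ₁, ∀ σ₂ ∈ Δ₂, res1 Δ₁ (σ₁ + σ₂) = σ₁ := by
    intro σ₁ h₁ σ₂ h₂
    funext i
    simp only [res1, Pi.add_apply]
    split
    · next h => have := hP2 σ₂ h₂ i h; omega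
    · next h => have := hP1 σ₁ h₁ i h; omega
  have hkey2 : ∀ σ₁ ∈ Δ₁, ∀ σ₂ ∈ Δ₂, res2 Δ₁ (σ₁ + σ₂) = σ₂ := by
    intro σ₁ h₁ σ₂ h₂
    funext i
    simp only [res2, Pi.add_apply]
    split
    · next h => have := hP2 σ₂ h₂ i h; omega
    · next h => have := hP1 σ₁ h₁ i h; omega
  -- splitting the multiplicity
  have hmultsplit : ∀ σ₁ ∈ Δ₁, ∀ σ₂ ∈ Δ₂, ∀ S : Fin n → ℕ,
      mult S (σ₁ + σ₂) = mult (res1 Δ₁ S) σ₁ * mult (res2 Δ₁ S) σ₂ := by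
    intro σ₁ h₁ σ₂ h₂ S
    unfold mult
    rw [← Finset.prod_mul_distrib]
    apply Finset.prod_congr rfl
    intro i _
    by_cases hPi : ∃ τ ∈ Δ₁, τ i ≠ 0
    · have h2 : σ₂ i = 0 := hP2 σ₂ h₂ i hPi
      simp [res1, res2, hPi, h2]
    · have h1 : σ₁ i = 0 := hP1 σ₁ h₁ i hPi
      simp [res1, res2, hPi, h1]
  -- rewriting the sum over the product complex
  have hsum : ∀ f : (Fin n → ℕ) → R,
      ∑ σ ∈ (Δ₁ ×ˢ Δ₂).image (fun p => p.1 + p.2), f σ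
        = ∑ σ₁ ∈ Δ₁, ∑ σ₂ ∈ Δ₂, f (σ₁ + σ₂) := by
    intro f
    rw [Finset.sum_image, Finset.sum_product]
    intro p hp q hq hpq
    obtain ⟨hp1, hp2⟩ := Finset.mem_product.mp hp
    obtain ⟨hq1, hq2⟩ := Finset.mem_product.mp hq
    beta_reduce at hpq
    have e1 : p.1 = q.1 := by
      rw [← hkey1 p.1 hp1 p.2 hp2, ← hkey1 q.1 hq1 q.2 hq2, hpq]
    have e2 : p.2 = q.2 := by
      rw [← hkey2 p.1 hp1 p.2 hp2, ← hkey2 q.1 hq1 q.2 hq2, hpq]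
    exact Prod.ext e1 e2
  -- if S is not supported on Supp Δ₁, all multiplicities in Δ₁ vanish (and symm.)
  have hvanish1 : ∀ S : Fin n → ℕ, res1 Δ₁ S ≠ S →
      ∀ σ₁ ∈ Δ₁, mult S σ₁ = 0 := by
    intro S hS σ₁ h₁
    have : ∃ i, ¬(∃ τ ∈ Δ₁, τ i ≠ 0) ∧ S i ≠ 0 := by
      by_contra hco
      push_neg at hco
      apply hS
      funext i
      simp only [res1]
      split
      · rfl
      · next h => push_neg at h; exact (hco i h).symm
    obtain ⟨i, hPi, hSi⟩ := this
    refine Finset.prod_eq_zero (Finset.mem_univ i) ?_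
    rw [hP1 σ₁ h₁ i hPi]
    exact Nat.choose_eq_zero_of_lt (Nat.pos_of_ne_zero hSi)
  have hvanish2 : ∀ S : Fin n → ℕ, res2 Δ₁ S ≠ S →
      ∀ σ₂ ∈ Δ₂, mult S σ₂ = 0 := by
    intro S hS σ₂ h₂
    have : ∃ i, (∃ τ ∈ Δ₁, τ i ≠ 0) ∧ S i ≠ 0 := by
      by_contra hco
      push_neg at hco
      apply hS
      funext i
      simp only [res2]
      split
      · next h => exact (hco i h).symm
      · rfl
    obtain ⟨i, hPi, hSi⟩ := this
    refine Finset.prod_eq_zero (Finset.mem_univ i) ?_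
    rw [hP2 σ₂ h₂ i hPi]
    exact Nat.choose_eq_zero_of_lt (Nat.pos_of_ne_zero hSi)
  constructor
  · rintro ⟨w, hw0, hwb⟩
    constructor
    · -- balancing for Δ₁, using w₁ σ = w (σ + τ₂)
      refine ⟨fun σ => w (σ + τ₂), fun σ hσ => hw0 _ (hmemΔ σ hσ τ₂ hτ₂), ?_⟩
      intro S hS
      by_cases hcase : res1 Δ₁ S = S
      · have hsum2 : ∑ i, (S + τ₂) i = (∑ i, S i) + (d₂ + 1) := by
          simp only [Pi.add_apply]
          rw [Finset.sum_add_distrib, hc₂ τ₂ hτ₂]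
        have hb := hwb (S + τ₂) (by omega)
        rw [hsum] at hb
        have hr1 : res1 Δ₁ (S + τ₂) = S := by
          funext i
          have hci := congrFun hcase i
          simp only [res1, Pi.add_apply] at hci ⊢
          split
          · next h => rw [if_pos h] at hci; have := hP2 τ₂ hτ₂ i h; omega
          · next h => rw [if_neg h] at hci; omega
        have hr2 : res2 Δ₁ (S + τ₂) = τ₂ := by
          funext i
          have hci := congrFun hcase i
          simp only [res1] at hci
          simp only [res2, Pi.add_apply]
          split
          · next h => rw [if_pos h] at hci; have := hP2 τ₂ hτ₂ i h; omega
          · next h => rw [if_neg h] at hci; omega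
        have hinner : ∀ σ₁ ∈ Δ₁,
            ∑ σ₂ ∈ Δ₂, w (σ₁ + σ₂) * (mult (S + τ₂) (σ₁ + σ₂) : R)
              = w (σ₁ + τ₂) * (mult S σ₁ : R) := by
          intro σ₁ h₁
          rw [Finset.sum_eq_single_of_mem τ₂ hτ₂]
          · rw [hmultsplit σ₁ h₁ τ₂ hτ₂, hr1, hr2,
              mult_delta Δ₂ hc₂ hone₂ hτ₂ hτ₂]
            simp
          · intro σ₂ h₂ hne2
            rw [hmultsplit σ₁ h₁ σ₂ h₂, hr1, hr2,
              mult_delta Δ₂ hc₂ hone₂ h₂ hτ₂, if_neg hne2]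
            simp
        calc ∑ σ₁ ∈ Δ₁, w (σ₁ + τ₂) * (mult S σ₁ : R)
            = ∑ σ₁ ∈ Δ₁, ∑ σ₂ ∈ Δ₂, w (σ₁ + σ₂) * (mult (S + τ₂) (σ₁ + σ₂) : R) :=
              (Finset.sum_congr rfl fun σ₁ h₁ => (hinner σ₁ h₁).symm)
          _ = 0 := hb
      · apply Finset.sum_eq_zero
        intro σ₁ h₁
        rw [hvanish1 S hcase σ₁ h₁]
        simp
    · -- balancing for Δ₂, using w₂ σ = w (τ₁ + σ)
      refine ⟨fun σ => w (τ₁ + σ), fun σ hσ => hw0 _ (hmemΔ τ₁ hτ₁ σ hσ), ?_⟩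
      intro S hS
      by_cases hcase : res2 Δ₁ S = S
      · have hsum2 : ∑ i, (τ₁ + S) i = (d₁ + 1) + (∑ i, S i) := by
          simp only [Pi.add_apply]
          rw [Finset.sum_add_distrib, hc₁ τ₁ hτ₁]
        have hb := hwb (τ₁ + S) (by omega)
        rw [hsum] at hb
        have hr1 : res1 Δ₁ (τ₁ + S) = τ₁ := by
          funext i
          have hci := congrFun hcase i
          simp only [res2] at hci
          simp only [res1, Pi.add_apply]
          split
          · next h => rw [if_pos h] at hci; omega
          · next h => rw [if_neg h] at hci; have := hP1 τ₁ hτ₁ i h; omega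
        have hr2 : res2 Δ₁ (τ₁ + S) = S := by
          funext i
          have hci := congrFun hcase i
          simp only [res2, Pi.add_apply] at hci ⊢
          split
          · next h => rw [if_pos h] at hci; omega
          · next h => rw [if_neg h] at hci; have := hP1 τ₁ hτ₁ i h; omega
        have houter : ∀ σ₁ ∈ Δ₁, σ₁ ≠ τ₁ →
            ∑ σ₂ ∈ Δ₂, w (σ₁ + σ₂) * (mult (τ₁ + S) (σ₁ + σ₂) : R) = 0 := by
          intro σ₁ h₁ hne1
          apply Finset.sum_eq_zero
          intro σ₂ h₂
          rw [hmultsplit σ₁ h₁ σ₂ h₂, hr1, hr2,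
            mult_delta Δ₁ hc₁ hone₁ h₁ hτ₁, if_neg hne1]
          simp
        rw [Finset.sum_eq_single_of_mem τ₁ hτ₁ houter] at hb
        calc ∑ σ₂ ∈ Δ₂, w (τ₁ + σ₂) * (mult S σ₂ : R)
            = ∑ σ₂ ∈ Δ₂, w (τ₁ + σ₂) * (mult (τ₁ + S) (τ₁ + σ₂) : R) := by
              apply Finset.sum_congr rfl
              intro σ₂ h₂
              rw [hmultsplit τ₁ hτ₁ σ₂ h₂, hr1, hr2,
                mult_delta Δ₁ hc₁ hone₁ hτ₁ hτ₁, if_pos rfl]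
              simp
          _ = 0 := hb
      · apply Finset.sum_eq_zero
        intro σ₂ h₂
        rw [hvanish2 S hcase σ₂ h₂]
        simp
  · rintro ⟨⟨w₁, hw₁0, hw₁b⟩, ⟨w₂, hw₂0, hw₂b⟩⟩
    refine ⟨fun σ => w₁ (res1 Δ₁ σ) * w₂ (res2 Δ₁ σ), ?_, ?_⟩
    · intro σ hσ
      obtain ⟨p, hp, rfl⟩ := Finset.mem_image.mp hσ
      obtain ⟨hp1, hp2⟩ := Finset.mem_product.mp hp
      show w₁ (res1 Δ₁ (p.1 + p.2)) * w₂ (res2 Δ₁ (p.1 + p.2)) ≠ 0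
      rw [hkey1 p.1 hp1 p.2 hp2, hkey2 p.1 hp1 p.2 hp2]
      exact mul_ne_zero (hw₁0 _ hp1) (hw₂0 _ hp2)
    · intro S hS
      rw [hsum]
      have hfactor :
          ∑ σ₁ ∈ Δ₁, ∑ σ₂ ∈ Δ₂,
              (w₁ (res1 Δ₁ (σ₁ + σ₂)) * w₂ (res2 Δ₁ (σ₁ + σ₂))) * (mult S (σ₁ + σ₂) : R)
            = (∑ σ₁ ∈ Δ₁, w₁ σ₁ * (mult (res1 Δ₁ S) σ₁ : R))
              * (∑ σ₂ ∈ Δ₂, w₂ σ₂ * (mult (res2 Δ₁ S) σ₂ : R)) := by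
        rw [Finset.sum_mul]
        apply Finset.sum_congr rfl
        intro σ₁ h₁
        rw [Finset.mul_sum]
        apply Finset.sum_congr rfl
        intro σ₂ h₂
        rw [hkey1 σ₁ h₁ σ₂ h₂, hkey2 σ₁ h₁ σ₂ h₂, hmultsplit σ₁ h₁ σ₂ h₂]
        push_cast
        ring
      rw [hfactor]
      have hsplitS : (∑ i, res1 Δ₁ S i) + (∑ i, res2 Δ₁ S i) = ∑ i, S i := by
        rw [← Finset.sum_add_distrib]
        exact Finset.sum_congr rfl fun i _ => res_add Δ₁ S i
      rcases (by omega : (∑ i, res1 Δ₁ S i) ≤ d₁ ∨ (∑ i, res2 Δ₁ S i) ≤ d₂) with h | h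
      · rw [hw₁b _ h, zero_mul]
      · rw [hw₂b _ h, mul_zero]
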